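/- Empirical pre-sparsity bound for lasso (Lemma 3.1): Let c > 1 and c̄ = (c+1)/(c−1). Suppose κ(c̄) > 0, λ > 0, and λ ≥ c·n·‖S‖_∞. Then any lasso estimator β̂, with m̂ = |supp(β̂) \ T|, satisfies √m̂ ≤ √s·√φ(m̂)·2c̄/κ(c̄) + 3(c̄+1)·√φ(m̂)·n·c_s/λ. -/

import Mathlib

open Finset MeasureTheory ProbabilityTheory

noncomputable section

/-- Prediction norm `‖δ‖_{2,n} = ((1/n) ∑_i (x_i'δ)²)^{1/2}`. -/
def predNorm (n p : ℕ) (x : Fin n → Fin p → ℝ) (δ : Fin p → ℝ) : ℝ :=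
  Real.sqrt ((n : ℝ)⁻¹ * ∑ i, (∑ j, x i j * δ j) ^ 2)

/-- Least-squares criterion `Q̂(β) = (1/n) ∑_i (y_i - x_i'β)²`. -/
def Qls (n p : ℕ) (x : Fin n → Fin p → ℝ) (y : Fin n → ℝ) (β : Fin p → ℝ) : ℝ :=
  (n : ℝ)⁻¹ * ∑ i, (y i - ∑ j, x i j * β j) ^ 2

/-- ℓ1-norm on `ℝ^p`. -/
def l1 {p : ℕ} (v : Fin p → ℝ) : ℝ := ∑ j, |v j|

/-- sup-norm (max-absolute-coordinate norm) on `ℝ^p`. -/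
def supNorm {p : ℕ} (v : Fin p → ℝ) : ℝ := ⨆ j, |v j|

/-- `restr A δ` is `δ` with coordinates outside `A` set to `0`. -/
def restr {p : ℕ} (A : Finset (Fin p)) (δ : Fin p → ℝ) : Fin p → ℝ :=
  fun j => if j ∈ A then δ j else 0

/-- Support of a vector, as a finset. -/
def suppF {p : ℕ} (v : Fin p → ℝ) : Finset (Fin p) :=
  Finset.univ.filter (fun j => v j ≠ 0)

/-- Restricted eigenvalue `κ(c̄)`. -/
def kappaRE (n p : ℕ) (x : Fin n → Fin p → ℝ) (T : Finset (Fin p)) (cbar : ℝ) : ℝ :=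
  sInf {r : ℝ | ∃ δ : Fin p → ℝ, δ ≠ 0 ∧ l1 (restr Tᶜ δ) ≤ cbar * l1 (restr T δ) ∧
    r = Real.sqrt T.card * predNorm n p x δ / l1 (restr T δ)}

/-- Restricted sparse maximal eigenvalue `φ(m)`. -/
def phiRSE (n p : ℕ) (x : Fin n → Fin p → ℝ) (T : Finset (Fin p)) (m : ℕ) : ℝ :=
  sSup {r : ℝ | ∃ δ : Fin p → ℝ, δ ≠ 0 ∧ (suppF (restr Tᶜ δ)).card ≤ m ∧
    r = (predNorm n p x δ) ^ 2 / ∑ j, δ j ^ 2}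

/-- Restricted sparse minimal eigenvalue `κ̃(m)²`. -/
def kappaTildeSq (n p : ℕ) (x : Fin n → Fin p → ℝ) (T : Finset (Fin p)) (m : ℕ) : ℝ :=
  sInf {r : ℝ | ∃ δ : Fin p → ℝ, δ ≠ 0 ∧ (suppF (restr Tᶜ δ)).card ≤ m ∧
    r = (predNorm n p x δ) ^ 2 / ∑ j, δ j ^ 2}

/-- The condition number `μ(m) = √φ(m)/κ̃(m)`. -/
def muCond (n p : ℕ) (x : Fin n → Fin p → ℝ) (T : Finset (Fin p)) (m : ℕ) : ℝ :=
  Real.sqrt (phiRSE n p x T m) / Real.sqrt (kappaTildeSq n p x T m)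

lemma l1_nonneg {p : ℕ} (v : Fin p → ℝ) : 0 ≤ l1 v :=
  Finset.sum_nonneg fun _ _ => abs_nonneg _

/-- Cauchy-Schwarz with 1/n weights. -/
lemma cs_n (n : ℕ) (a b : Fin n → ℝ) :
    |(n : ℝ)⁻¹ * ∑ i, a i * b i| ≤
      Real.sqrt ((n : ℝ)⁻¹ * ∑ i, a i ^ 2) * Real.sqrt ((n : ℝ)⁻¹ * ∑ i, b i ^ 2) := by
  have ha : (0:ℝ) ≤ ∑ i, a i ^ 2 := Finset.sum_nonneg fun i _ => sq_nonneg _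
  have hb : (0:ℝ) ≤ ∑ i, b i ^ 2 := Finset.sum_nonneg fun i _ => sq_nonneg _
  rw [← Real.sqrt_mul (by positivity), ← Real.sqrt_sq_eq_abs]
  apply Real.sqrt_le_sqrt
  have := Finset.sum_mul_sq_le_sq_mul_sq Finset.univ a b
  calc ((n : ℝ)⁻¹ * ∑ i, a i * b i) ^ 2
      = (n:ℝ)⁻¹ ^ 2 * (∑ i, a i * b i) ^ 2 := by ring
    _ ≤ (n:ℝ)⁻¹ ^ 2 * ((∑ i, a i ^ 2) * ∑ i, b i ^ 2) := by
        nlinarith [sq_nonneg ((n:ℝ)⁻¹)]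
    _ = (n : ℝ)⁻¹ * (∑ i, a i ^ 2) * ((n : ℝ)⁻¹ * ∑ i, b i ^ 2) := by ring

lemma predNorm_sq (n p : ℕ) (x : Fin n → Fin p → ℝ) (δ : Fin p → ℝ) :
    (predNorm n p x δ) ^ 2 = (n : ℝ)⁻¹ * ∑ i, (∑ j, x i j * δ j) ^ 2 := by
  rw [predNorm, Real.sq_sqrt (by positivity)]

/-- KKT scalar lemma. -/
lemma key_real (a b L : ℝ) (hb : b ≠ 0)
    (h : ∀ t : ℝ, 0 ≤ -(t * a) + t ^ 2 + L * (|b + t| - |b|)) : a ^ 2 = L ^ 2 := by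
  rcases hb.lt_or_gt with hb | hb
  · have h1 : a ≤ -L := by
      by_contra hgt
      push_neg at hgt
      set t := min ((a + L)/2) (-b/2) with ht
      have ht0 : 0 < t := by apply lt_min <;> linarith
      have ht2 : t ≤ -b/2 := min_le_right _ _
      have habs : |b + t| - |b| = -t := by
        rw [abs_of_neg hb, abs_of_neg (by linarith)]; ring
      have := h t
      rw [habs] at this
      have ht3 : t ≤ (a + L)/2 := min_le_left _ _
      nlinarith
    have h2 : -L ≤ a := by
      by_contra hgt
      push_neg at hgt
      set m := min ((-L - a)/2) (-b/2) with hm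
      have hm1 : 0 < m := lt_min (by linarith) (by linarith)
      have hm2 : m ≤ -b/2 := min_le_right _ _
      have hm3 : m ≤ (-L - a)/2 := min_le_left _ _
      have habs : |b + -m| - |b| = m := by
        rw [abs_of_neg hb, abs_of_neg (by linarith)]; ring
      have := h (-m)
      rw [habs] at this
      nlinarith
    have : a = -L := le_antisymm h1 h2
    rw [this]; ring
  · have h1 : a ≤ L := by
      by_contra hgt
      push_neg at hgt
      set t := min ((a - L)/2) (b/2) with ht
      have ht0 : 0 < t := by apply lt_min <;> linarith
      have habs : |b + t| - |b| = t := by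
        rw [abs_of_pos hb, abs_of_pos (by linarith)]; ring
      have := h t
      rw [habs] at this
      have ht3 : t ≤ (a - L)/2 := min_le_left _ _
      nlinarith
    have h2 : L ≤ a := by
      by_contra hgt
      push_neg at hgt
      set m := min ((L - a)/2) (b/2) with hm
      have hm1 : 0 < m := lt_min (by linarith) (by linarith)
      have hm2 : m ≤ b/2 := min_le_right _ _
      have hm3 : m ≤ (L - a)/2 := min_le_left _ _
      have habs : |b + -m| - |b| = -m := by
        rw [abs_of_pos hb, abs_of_pos (by linarith)]; ring
      have := h (-m)
      rw [habs] at this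
      nlinarith
    have : a = L := le_antisymm h1 h2
    rw [this]

/-- Swapping a double sum. -/
lemma swap_sum (n p : ℕ) (x : Fin n → Fin p → ℝ) (v : Fin p → ℝ) (w : Fin n → ℝ) :
    ∑ j, (2/(n:ℝ) * ∑ i, w i * x i j) * v j
      = 2 * ((n:ℝ)⁻¹ * ∑ i, w i * ∑ j, x i j * v j) := by
  simp only [Finset.mul_sum, Finset.sum_mul]
  rw [Finset.sum_comm]
  exact Finset.sum_congr rfl fun i _ => Finset.sum_congr rfl fun j _ => by ring

lemma sum_sq_pos_of_ne_zero {p : ℕ} (w : Fin p → ℝ) (hw : w ≠ 0) :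
    0 < ∑ j, w j ^ 2 := by
  rcases Function.ne_iff.mp hw with ⟨j0, hj0⟩
  exact Finset.sum_pos' (fun j _ => sq_nonneg _)
    ⟨j0, Finset.mem_univ _, pow_two_pos_of_ne_zero hj0⟩

/-- `predNorm w ≤ √φ(m) ‖w‖₂` for vectors with at most `m` nonzero coords off `T`. -/
lemma phi_le (n p : ℕ) (x : Fin n → Fin p → ℝ) (T : Finset (Fin p)) (m : ℕ)
    (hx : ∀ j, (n : ℝ)⁻¹ * ∑ i, x i j ^ 2 = 1)
    (w : Fin p → ℝ) (hw : w ≠ 0) (hsupp : (suppF (restr Tᶜ w)).card ≤ m) :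
    predNorm n p x w ≤ Real.sqrt (phiRSE n p x T m) * Real.sqrt (∑ j, w j ^ 2) := by
  have hw2 : 0 < ∑ j, w j ^ 2 := sum_sq_pos_of_ne_zero w hw
  have hbdd : BddAbove {r : ℝ | ∃ δ : Fin p → ℝ, δ ≠ 0 ∧ (suppF (restr Tᶜ δ)).card ≤ m ∧
      r = (predNorm n p x δ) ^ 2 / ∑ j, δ j ^ 2} := by
    refine ⟨p, ?_⟩
    rintro r ⟨δ, hδ, -, rfl⟩
    have hδ2 : 0 < ∑ j, δ j ^ 2 := sum_sq_pos_of_ne_zero δ hδ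
    rw [div_le_iff₀ hδ2, predNorm_sq]
    have hCS : ∀ i ∈ Finset.univ, (∑ j, x i j * δ j) ^ 2 ≤ (∑ j, x i j ^ 2) * ∑ j, δ j ^ 2 :=
      fun i _ => Finset.sum_mul_sq_le_sq_mul_sq Finset.univ _ _
    calc (n:ℝ)⁻¹ * ∑ i, (∑ j, x i j * δ j) ^ 2
        ≤ (n:ℝ)⁻¹ * ∑ i, (∑ j, x i j ^ 2) * ∑ j, δ j ^ 2 :=
          mul_le_mul_of_nonneg_left (Finset.sum_le_sum hCS) (by positivity)
      _ = (n:ℝ)⁻¹ * ((∑ j, ∑ i, x i j ^ 2) * ∑ j, δ j ^ 2) := by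
          rw [← Finset.sum_mul, Finset.sum_comm]
      _ = (∑ j, (n:ℝ)⁻¹ * ∑ i, x i j ^ 2) * ∑ j, δ j ^ 2 := by
          rw [← Finset.mul_sum]; ring
      _ = (∑ _j : Fin p, (1:ℝ)) * ∑ j, δ j ^ 2 := by
          rw [Finset.sum_congr rfl fun j _ => hx j]
      _ = (p:ℝ) * ∑ j, δ j ^ 2 := by simp
  have hmem : (predNorm n p x w) ^ 2 / ∑ j, w j ^ 2 ∈
      {r : ℝ | ∃ δ : Fin p → ℝ, δ ≠ 0 ∧ (suppF (restr Tᶜ δ)).card ≤ m ∧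
        r = (predNorm n p x δ) ^ 2 / ∑ j, δ j ^ 2} := ⟨w, hw, hsupp, rfl⟩
  have hle : (predNorm n p x w) ^ 2 / ∑ j, w j ^ 2 ≤ phiRSE n p x T m :=
    le_csSup hbdd hmem
  have hφ : (predNorm n p x w) ^ 2 ≤ phiRSE n p x T m * ∑ j, w j ^ 2 := by
    rw [div_le_iff₀ hw2] at hle; exact hle
  have h0 : 0 ≤ phiRSE n p x T m := le_trans (by positivity) hle
  calc predNorm n p x w = Real.sqrt ((predNorm n p x w) ^ 2) :=
        (Real.sqrt_sq (Real.sqrt_nonneg _)).symm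
    _ ≤ Real.sqrt (phiRSE n p x T m * ∑ j, w j ^ 2) := Real.sqrt_le_sqrt hφ
    _ = _ := Real.sqrt_mul h0 _

/-- Restricted eigenvalue inequality. -/
lemma kappa_mul_le (n p : ℕ) (x : Fin n → Fin p → ℝ) (T : Finset (Fin p)) (cbar : ℝ)
    (δ : Fin p → ℝ) (hδ : δ ≠ 0)
    (hcone : l1 (restr Tᶜ δ) ≤ cbar * l1 (restr T δ)) :
    kappaRE n p x T cbar * l1 (restr T δ) ≤ Real.sqrt T.card * predNorm n p x δ := by
  have hbdd : BddBelow {r : ℝ | ∃ δ : Fin p → ℝ, δ ≠ 0 ∧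
      l1 (restr Tᶜ δ) ≤ cbar * l1 (restr T δ) ∧
      r = Real.sqrt T.card * predNorm n p x δ / l1 (restr T δ)} := by
    refine ⟨0, ?_⟩
    rintro r ⟨δ', -, -, rfl⟩
    exact div_nonneg (mul_nonneg (Real.sqrt_nonneg _) (Real.sqrt_nonneg _)) (l1_nonneg _)
  have hℓ : 0 < l1 (restr T δ) := by
    rcases (l1_nonneg (restr T δ)).lt_or_eq with h | h
    · exact h
    · exfalso
      apply hδ
      have hT0 : l1 (restr T δ) = 0 := h.symm
      have hTc : l1 (restr Tᶜ δ) = 0 := by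
        have h1 := l1_nonneg (restr Tᶜ δ)
        have h2 : cbar * l1 (restr T δ) = 0 := by rw [hT0, mul_zero]
        linarith [hcone]
      funext j
      by_cases hj : j ∈ T
      · have := (Finset.sum_eq_zero_iff_of_nonneg
          (fun k _ => abs_nonneg (restr T δ k))).mp hT0 j (Finset.mem_univ j)
        have := abs_eq_zero.mp this
        simpa [restr, hj] using this
      · have := (Finset.sum_eq_zero_iff_of_nonneg
          (fun k _ => abs_nonneg (restr Tᶜ δ k))).mp hTc j (Finset.mem_univ j)
        have := abs_eq_zero.mp this
        simpa [restr, Finset.mem_compl, hj] using this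
  have hmem : Real.sqrt T.card * predNorm n p x δ / l1 (restr T δ) ∈
      {r : ℝ | ∃ δ : Fin p → ℝ, δ ≠ 0 ∧
        l1 (restr Tᶜ δ) ≤ cbar * l1 (restr T δ) ∧
        r = Real.sqrt T.card * predNorm n p x δ / l1 (restr T δ)} := ⟨δ, hδ, hcone, rfl⟩
  have hle : kappaRE n p x T cbar ≤ Real.sqrt T.card * predNorm n p x δ / l1 (restr T δ) :=
    csInf_le hbdd hmem
  calc kappaRE n p x T cbar * l1 (restr T δ)
      ≤ Real.sqrt T.card * predNorm n p x δ / l1 (restr T δ) * l1 (restr T δ) :=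
        mul_le_mul_of_nonneg_right hle hℓ.le
    _ = Real.sqrt T.card * predNorm n p x δ := div_mul_cancel₀ _ hℓ.ne'

set_option maxHeartbeats 2000000 in
/-- Lemma 3.1: empirical pre-sparsity bound for lasso. -/
theorem lasso_empirical_pre_sparsity
    (n p : ℕ) (hn : 0 < n) (hp : 0 < p)
    (x : Fin n → Fin p → ℝ) (y f : Fin n → ℝ)
    (hx : ∀ j, (n : ℝ)⁻¹ * ∑ i, x i j ^ 2 = 1)
    (β0 : Fin p → ℝ) (T : Finset (Fin p)) (hT : T = suppF β0)
    (s : ℕ) (hs : s = T.card) (hs1 : 1 ≤ s)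
    (cs : ℝ) (hcs : cs = Real.sqrt ((n : ℝ)⁻¹ * ∑ i, (f i - ∑ j, x i j * β0 j) ^ 2))
    (c : ℝ) (hc : 1 < c) (cbar : ℝ) (hcbar : cbar = (c + 1) / (c - 1))
    (hκ : 0 < kappaRE n p x T cbar)
    (S : Fin p → ℝ) (hS : S = fun j => (2 / n : ℝ) * ∑ i, (y i - f i) * x i j)
    (lam : ℝ) (hlam : 0 < lam) (hlamS : c * n * supNorm S ≤ lam)
    (βhat : Fin p → ℝ)
    (hβhat : ∀ β : Fin p → ℝ,
      Qls n p x y βhat + lam / n * l1 βhat ≤ Qls n p x y β + lam / n * l1 β)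
    (mhat : ℕ) (hmhat : mhat = (suppF βhat \ T).card) :
    Real.sqrt mhat ≤
      Real.sqrt s * Real.sqrt (phiRSE n p x T mhat) * (2 * cbar) / kappaRE n p x T cbar +
        3 * (cbar + 1) * Real.sqrt (phiRSE n p x T mhat) * n * cs / lam := by
  have hn0 : (0:ℝ) < n := by exact_mod_cast hn
  have hc0 : (0:ℝ) < c := by linarith
  have hc1 : (0:ℝ) < c - 1 := by linarith
  set κ := kappaRE n p x T cbar with hκdef
  set φ := phiRSE n p x T mhat with hφdef
  have hcbar0 : 0 < cbar := by rw [hcbar]; positivity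
  have hcs0 : 0 ≤ cs := by rw [hcs]; exact Real.sqrt_nonneg _
  have hsφ : 0 ≤ Real.sqrt φ := Real.sqrt_nonneg _
  have hss : 0 ≤ Real.sqrt (s:ℝ) := Real.sqrt_nonneg _
  have hRHS : 0 ≤ Real.sqrt s * Real.sqrt φ * (2 * cbar) / κ +
      3 * (cbar + 1) * Real.sqrt φ * n * cs / lam := by
    apply add_nonneg
    · exact div_nonneg (mul_nonneg (mul_nonneg hss hsφ) (by linarith)) hκ.le
    · exact div_nonneg
        (mul_nonneg (mul_nonneg (mul_nonneg (by linarith) hsφ) hn0.le) hcs0) hlam.le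
  -- the error vector
  set δv : Fin p → ℝ := fun j => βhat j - β0 j with hδvdef
  have hu : ∀ i, ∑ k, x i k * βhat k = (∑ k, x i k * β0 k) + ∑ j, x i j * δv j := by
    intro i
    rw [← Finset.sum_add_distrib]
    refine Finset.sum_congr rfl fun k _ => ?_
    simp only [hδvdef]; ring
  set D := predNorm n p x δv with hDdef
  have hD0 : 0 ≤ D := Real.sqrt_nonneg _
  have hD2 : D ^ 2 = (n:ℝ)⁻¹ * ∑ i, (∑ j, x i j * δv j) ^ 2 := by
    rw [hDdef]; exact predNorm_sq n p x δv
  -- sup-norm bound on the score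
  have hSsup : ∀ j, |S j| ≤ supNorm S := by
    intro j
    have : |S j| ≤ ⨆ k, |S k| :=
      le_ciSup (Set.Finite.bddAbove (Set.finite_range fun k => |S k|)) j
    simpa [supNorm] using this
  have hsup : supNorm S ≤ lam / (c * n) := by
    rw [le_div_iff₀ (by positivity)]
    nlinarith [hlamS]
  ------------------------------------------------------------------
  -- RATE STEP : D ≤ (1+1/c) λ √s /(n κ) + 2 cs
  ------------------------------------------------------------------
  have hB1 : 0 ≤ (1 + 1/c) * lam * Real.sqrt s / ((n:ℝ) * κ) := by
    apply div_nonneg _ (mul_nonneg hn0.le hκ.le)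
    apply mul_nonneg (mul_nonneg _ hlam.le) hss
    have : 0 < 1/c := by positivity
    linarith
  have hrate : D ≤ (1 + 1/c) * lam * Real.sqrt s / ((n:ℝ) * κ) + 2 * cs := by
    have hB0 : 0 ≤ (1 + 1/c) * lam * Real.sqrt s / ((n:ℝ) * κ) + 2 * cs := by linarith
    have hopt := hβhat β0
    have hQid : Qls n p x y βhat +
        2 * ((n:ℝ)⁻¹ * ∑ i, (y i - ∑ k, x i k * β0 k) * (∑ j, x i j * δv j))
        = Qls n p x y β0 + (n:ℝ)⁻¹ * ∑ i, (∑ j, x i j * δv j) ^ 2 := by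
      have hpt : ∀ i ∈ Finset.univ, (y i - ∑ k, x i k * βhat k) ^ 2 +
          2 * ((y i - ∑ k, x i k * β0 k) * (∑ j, x i j * δv j))
          = (y i - ∑ k, x i k * β0 k) ^ 2 + (∑ j, x i j * δv j) ^ 2 := by
        intro i _
        rw [hu i]; ring
      have h1 := Finset.sum_congr rfl hpt
      rw [Finset.sum_add_distrib, Finset.sum_add_distrib, ← Finset.mul_sum] at h1
      simp only [Qls]
      linear_combination (n:ℝ)⁻¹ * h1
    have hstep1 : D ^ 2 ≤
        2 * ((n:ℝ)⁻¹ * ∑ i, (y i - ∑ k, x i k * β0 k) * (∑ j, x i j * δv j))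
        + lam / n * l1 β0 - lam / n * l1 βhat := by
      linarith [hQid, hopt, hD2]
    have hsplit : ∑ i, (y i - ∑ k, x i k * β0 k) * (∑ j, x i j * δv j)
        = (∑ i, (y i - f i) * (∑ j, x i j * δv j))
          + ∑ i, (f i - ∑ k, x i k * β0 k) * (∑ j, x i j * δv j) := by
      rw [← Finset.sum_add_distrib]
      exact Finset.sum_congr rfl fun i _ => by ring
    have hSδ : ∑ j, S j * δv j
        = 2 * ((n:ℝ)⁻¹ * ∑ i, (y i - f i) * (∑ j, x i j * δv j)) := by
      rw [hS]; exact swap_sum n p x δv (fun i => y i - f i)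
    have habs1 : |∑ j, S j * δv j| ≤ lam / (c * n) * l1 δv := by
      calc |∑ j, S j * δv j| ≤ ∑ j, |S j * δv j| := Finset.abs_sum_le_sum_abs _ _
        _ ≤ ∑ j, lam / (c * n) * |δv j| := Finset.sum_le_sum fun j _ => by
            rw [abs_mul]
            exact mul_le_mul_of_nonneg_right ((hSsup j).trans hsup) (abs_nonneg _)
        _ = lam / (c * n) * l1 δv := by rw [l1, Finset.mul_sum]
    have habs2 : |(n:ℝ)⁻¹ * ∑ i, (f i - ∑ k, x i k * β0 k) * (∑ j, x i j * δv j)|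
        ≤ cs * D := by
      have h := cs_n n (fun i => f i - ∑ k, x i k * β0 k) (fun i => ∑ j, x i j * δv j)
      have hDalt : D = Real.sqrt ((n:ℝ)⁻¹ * ∑ i, (∑ j, x i j * δv j) ^ 2) := by
        rw [hDdef, predNorm]
      rw [hcs, hDalt]
      exact h
    have hstep2 : D ^ 2 ≤ lam / (c * n) * l1 δv + 2 * (cs * D)
        + lam / n * l1 β0 - lam / n * l1 βhat := by
      rw [hsplit] at hstep1
      linarith [hstep1, hSδ, habs1, habs2,
        le_abs_self (∑ j, S j * δv j),
        le_abs_self ((n:ℝ)⁻¹ * ∑ i, (f i - ∑ k, x i k * β0 k) * (∑ j, x i j * δv j)),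
        neg_abs_le (∑ j, S j * δv j),
        neg_abs_le ((n:ℝ)⁻¹ * ∑ i, (f i - ∑ k, x i k * β0 k) * (∑ j, x i j * δv j))]
    -- ℓ1 decomposition
    have h3 : l1 β0 - l1 βhat ≤ l1 (restr T δv) - l1 (restr Tᶜ δv) := by
      have hpt : ∀ j ∈ Finset.univ, |β0 j| - |βhat j|
          ≤ |restr T δv j| - |restr Tᶜ δv j| := by
        intro j _
        by_cases hj : j ∈ T
        · have h1 : |β0 j| - |βhat j| ≤ |βhat j - β0 j| := by
            have := abs_sub_abs_le_abs_sub (β0 j) (βhat j)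
            rw [abs_sub_comm] at this
            linarith
          simp only [restr, hδvdef, hj, if_true, Finset.mem_compl, not_not]
          rw [if_neg (by simpa using hj)]
          simpa using h1
        · have hb0 : β0 j = 0 := by
            by_contra hne
            exact hj (hT ▸ Finset.mem_filter.mpr ⟨Finset.mem_univ _, hne⟩)
          simp only [restr, hδvdef, hj, if_false, Finset.mem_compl]
          rw [if_pos (by simpa using hj)]
          simp [hb0]
      have := Finset.sum_le_sum hpt
      rw [Finset.sum_sub_distrib, Finset.sum_sub_distrib] at this
      simpa [l1] using this
    have h4 : l1 δv = l1 (restr T δv) + l1 (restr Tᶜ δv) := by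
      simp only [l1, restr, ← Finset.sum_add_distrib]
      refine Finset.sum_congr rfl fun j _ => ?_
      by_cases hj : j ∈ T <;> simp [hj, Finset.mem_compl]
    set ℓT := l1 (restr T δv) with hℓTdef
    set ℓTc := l1 (restr Tᶜ δv) with hℓTcdef
    have hℓT0 : 0 ≤ ℓT := l1_nonneg _
    have hℓTc0 : 0 ≤ ℓTc := l1_nonneg _
    have h3' : lam / n * l1 β0 - lam / n * l1 βhat ≤ lam / n * ℓT - lam / n * ℓTc := by
      have h := mul_le_mul_of_nonneg_left h3 (div_pos hlam hn0).le
      rw [mul_sub, mul_sub] at h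
      linarith
    have h4' : lam / (c * n) * l1 δv = lam / (c * n) * ℓT + lam / (c * n) * ℓTc := by
      rw [h4]; ring
    have hmain : D ^ 2 ≤ 2 * (cs * D) + (lam / n + lam / (c * n)) * ℓT
        - (lam / n - lam / (c * n)) * ℓTc := by
      linarith [hstep2, h3', h4']
    have hfac : 0 ≤ lam / n - lam / (c * n) := by
      rw [sub_nonneg, div_le_div_iff₀ (by positivity) hn0]
      nlinarith [mul_pos (mul_pos hlam hn0) hc1]
    by_cases hcone : ℓTc ≤ cbar * ℓT
    · by_cases hδ0 : δv = 0
      · have hDz : D = 0 := by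
          rw [hDdef, hδ0]
          simp [predNorm]
        linarith
      · have hκℓ := kappa_mul_le n p x T cbar δv hδ0 (by
          rw [← hℓTdef, ← hℓTcdef]; exact hcone)
        have hcard : Real.sqrt (T.card : ℝ) = Real.sqrt (s : ℝ) := by rw [hs]
        rw [hcard, ← hκdef, ← hℓTdef, ← hDdef] at hκℓ
        rcases hD0.lt_or_eq with hDpos | hDeq
        · have hℓTle : ℓT ≤ Real.sqrt s * D / κ := by
            rw [le_div_iff₀ hκ]
            linarith [hκℓ]
          have hmul : (lam / n + lam / (c * n)) * ℓT
              ≤ (lam / n + lam / (c * n)) * (Real.sqrt s * D / κ) := by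
            apply mul_le_mul_of_nonneg_left hℓTle
            positivity
          have hdropped : D ^ 2 ≤ 2 * (cs * D)
              + (lam / n + lam / (c * n)) * (Real.sqrt s * D / κ) := by
            nlinarith [hmain, hmul, mul_nonneg hfac hℓTc0]
          have hZ : D * D ≤ D * (2 * cs + (lam / n + lam / (c * n)) * (Real.sqrt s / κ)) := by
            have hre : D * (2 * cs + (lam / n + lam / (c * n)) * (Real.sqrt s / κ))
                = 2 * (cs * D) + (lam / n + lam / (c * n)) * (Real.sqrt s * D / κ) := by
              ring
            rw [hre, ← pow_two]
            exact hdropped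
          have hDle := le_of_mul_le_mul_left hZ hDpos
          have heqZ : 2 * cs + (lam / n + lam / (c * n)) * (Real.sqrt s / κ)
              = (1 + 1/c) * lam * Real.sqrt s / ((n:ℝ) * κ) + 2 * cs := by
            field_simp
            ring
          linarith [hDle, le_of_eq heqZ]
        · linarith [hDeq, hB0]
    · push_neg at hcone
      have hid2 : (lam / n + lam / (c * n)) * ℓT = (lam / n - lam / (c * n)) * cbar * ℓT := by
        have hid : lam / n + lam / (c * n) = (lam / n - lam / (c * n)) * cbar := by
          rw [hcbar]
          field_simp
        rw [hid]
      have hbr : (lam / n + lam / (c * n)) * ℓT - (lam / n - lam / (c * n)) * ℓTc ≤ 0 := by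
        nlinarith [mul_nonneg hfac (sub_nonneg.mpr hcone.le), hid2]
      have hD2cs : D ^ 2 ≤ 2 * (cs * D) := by linarith [hmain, hbr]
      rcases hD0.lt_or_eq with hDpos | hDeq
      · have : D * D ≤ D * (2 * cs) := by rw [← pow_two]; linarith [hD2cs]
        have := le_of_mul_le_mul_left this hDpos
        linarith
      · linarith [hDeq, hB0]
  ------------------------------------------------------------------
  -- SPARSITY STEP
  ------------------------------------------------------------------
  set A := suppF βhat \ T with hA
  set G : Fin p → ℝ := fun j => 2/(n:ℝ) * ∑ i, (y i - ∑ k, x i k * βhat k) * x i j with hGdef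
  -- KKT conditions
  have hKKT : ∀ j ∈ suppF βhat, G j ^ 2 = (lam / n) ^ 2 := by
    intro j hj
    have hbj : βhat j ≠ 0 := by
      simpa [suppF] using hj
    apply key_real _ _ _ hbj
    intro t
    have hupd : ∀ i, ∑ k, x i k * Function.update βhat j (βhat j + t) k
        = (∑ k, x i k * βhat k) + t * x i j := by
      intro i
      have hk : ∀ k ∈ Finset.univ, x i k * Function.update βhat j (βhat j + t) k
          = x i k * βhat k + (if k = j then t * x i j else 0) := by
        intro k _
        rcases eq_or_ne k j with rfl | hk
        · simp [Function.update_self]; ring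
        · simp [Function.update_of_ne hk, hk]
      rw [Finset.sum_congr rfl hk, Finset.sum_add_distrib]
      simp
    have hQup : Qls n p x y (Function.update βhat j (βhat j + t))
        = Qls n p x y βhat - t * G j + t ^ 2 := by
      simp only [Qls, hGdef]
      have hpt : ∀ i ∈ Finset.univ,
          (y i - ∑ k, x i k * Function.update βhat j (βhat j + t) k) ^ 2
          = (y i - ∑ k, x i k * βhat k) ^ 2
            - 2 * t * ((y i - ∑ k, x i k * βhat k) * x i j) + t ^ 2 * x i j ^ 2 := by
        intro i _
        rw [hupd i]; ring
      rw [Finset.sum_congr rfl hpt, Finset.sum_add_distrib, Finset.sum_sub_distrib,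
        ← Finset.mul_sum, ← Finset.mul_sum]
      linear_combination t ^ 2 * hx j
    have hl1up : l1 (Function.update βhat j (βhat j + t))
        = l1 βhat + (|βhat j + t| - |βhat j|) := by
      simp only [l1]
      have hk : ∀ k ∈ Finset.univ, |Function.update βhat j (βhat j + t) k|
          = |βhat k| + (if k = j then |βhat j + t| - |βhat j| else 0) := by
        intro k _
        rcases eq_or_ne k j with rfl | hk
        · simp [Function.update_self]
        · simp [Function.update_of_ne hk, hk]
      rw [Finset.sum_congr rfl hk, Finset.sum_add_distrib]
      simp
    have hb := hβhat (Function.update βhat j (βhat j + t))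
    rw [hQup, hl1up] at hb
    nlinarith [hb]
  have hGA : ∀ j ∈ A, G j ^ 2 = (lam / n) ^ 2 := fun j hj =>
    hKKT j (Finset.mem_sdiff.mp hj).1
  have hGabs : ∀ j ∈ A, |G j| = lam / n := by
    intro j hj
    have h1 := hGA j hj
    have : |G j| = |lam / n| := by
      rw [← Real.sqrt_sq_eq_abs, ← Real.sqrt_sq_eq_abs, h1]
    rw [this, abs_of_pos (by positivity)]
  set w := restr A G with hwdef
  have hsum_w_sq : ∑ j, w j ^ 2 = mhat * (lam / n) ^ 2 := by
    simp only [hwdef, restr, apply_ite (· ^ 2), show ((0:ℝ) ^ 2 = 0) by norm_num]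
    rw [Finset.sum_ite_mem, Finset.univ_inter, Finset.sum_congr rfl hGA,
      Finset.sum_const, ← hmhat, nsmul_eq_mul]
  have hGw : ∑ j, G j * w j = mhat * (lam / n) ^ 2 := by
    have h1 : ∀ j ∈ A, G j * G j = (lam / n) ^ 2 := fun j hj => by
      rw [← hGA j hj, pow_two]
    simp only [hwdef, restr, mul_ite, mul_zero]
    rw [Finset.sum_ite_mem, Finset.univ_inter, Finset.sum_congr rfl h1,
      Finset.sum_const, ← hmhat, nsmul_eq_mul]
  have hl1w : ∑ j, |w j| = mhat * (lam / n) := by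
    simp only [hwdef, restr, apply_ite abs, abs_zero]
    rw [Finset.sum_ite_mem, Finset.univ_inter, Finset.sum_congr rfl hGabs,
      Finset.sum_const, ← hmhat, nsmul_eq_mul]
  by_cases hm0 : mhat = 0
  · refine le_trans (le_of_eq ?_) hRHS
    rw [hm0]; simp
  · have hmpos : (0:ℝ) < mhat := by exact_mod_cast Nat.pos_of_ne_zero hm0
    have hM0 : 0 < Real.sqrt mhat := Real.sqrt_pos.mpr hmpos
    have hM2 : Real.sqrt mhat ^ 2 = (mhat : ℝ) := Real.sq_sqrt hmpos.le
    have hAne : A.Nonempty := by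
      rw [← Finset.card_pos, ← hmhat]
      exact Nat.pos_of_ne_zero hm0
    obtain ⟨j0, hj0⟩ := hAne
    have hw0 : w ≠ 0 := by
      intro hcontra
      have hwj : w j0 = 0 := congrFun hcontra j0
      rw [hwdef] at hwj
      simp only [restr, hj0, if_true] at hwj
      have := hGabs j0 hj0
      rw [hwj, abs_zero] at this
      have : (0:ℝ) < lam / n := by positivity
      linarith
    have hsuppw : (suppF (restr Tᶜ w)).card ≤ mhat := by
      rw [hmhat]
      apply Finset.card_le_card
      intro j hjm
      rw [suppF, Finset.mem_filter] at hjm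
      have hne : restr Tᶜ w j ≠ 0 := hjm.2
      by_cases hjc : j ∈ Tᶜ
      · have hwj : w j ≠ 0 := by
          simpa [restr, hjc] using hne
        rw [hwdef] at hwj
        by_cases hjA : j ∈ A
        · exact hjA
        · exact absurd (by simp [restr, hjA]) hwj
      · exact absurd (by simp [restr, hjc]) hne
    have hphiw := phi_le n p x T mhat hx w hw0 hsuppw
    have hsqw : Real.sqrt (∑ j, w j ^ 2) = Real.sqrt mhat * (lam / n) := by
      rw [hsum_w_sq, Real.sqrt_mul hmpos.le, Real.sqrt_sq (by positivity)]
    rw [hsqw, ← hφdef] at hphiw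
    -- the big inequality
    have hE2 : ∑ j, G j * w j
        = 2 * ((n:ℝ)⁻¹ * ∑ i, (y i - ∑ k, x i k * βhat k) * ∑ j, x i j * w j) := by
      simp only [hGdef]
      exact swap_sum n p x w (fun i => y i - ∑ k, x i k * βhat k)
    have hdec : ∑ i, (y i - ∑ k, x i k * βhat k) * (∑ j, x i j * w j)
        = (∑ i, (y i - f i) * (∑ j, x i j * w j))
          + (∑ i, (f i - ∑ k, x i k * β0 k) * (∑ j, x i j * w j))
          - ∑ i, (∑ j, x i j * δv j) * (∑ j, x i j * w j) := by
      rw [← Finset.sum_add_distrib, ← Finset.sum_sub_distrib]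
      refine Finset.sum_congr rfl fun i _ => ?_
      rw [hu i]; ring
    have hT1 : ∑ j, S j * w j
        = 2 * ((n:ℝ)⁻¹ * ∑ i, (y i - f i) * ∑ j, x i j * w j) := by
      rw [hS]; exact swap_sum n p x w (fun i => y i - f i)
    have hT1b : |∑ j, S j * w j| ≤ lam / (c * n) * (mhat * (lam / n)) := by
      calc |∑ j, S j * w j| ≤ ∑ j, |S j * w j| := Finset.abs_sum_le_sum_abs _ _
        _ ≤ ∑ j, lam / (c * n) * |w j| := Finset.sum_le_sum fun j _ => by
            rw [abs_mul]
            exact mul_le_mul_of_nonneg_right ((hSsup j).trans hsup) (abs_nonneg _)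
        _ = lam / (c * n) * (mhat * (lam / n)) := by rw [← Finset.mul_sum, hl1w]
    have hPw : 0 ≤ predNorm n p x w := Real.sqrt_nonneg _
    have hT2 : |(n:ℝ)⁻¹ * ∑ i, (f i - ∑ k, x i k * β0 k) * (∑ j, x i j * w j)|
        ≤ cs * predNorm n p x w := by
      have h := cs_n n (fun i => f i - ∑ k, x i k * β0 k) (fun i => ∑ j, x i j * w j)
      rw [hcs, predNorm]
      exact h
    have hT3 : |(n:ℝ)⁻¹ * ∑ i, (∑ j, x i j * δv j) * (∑ j, x i j * w j)|
        ≤ D * predNorm n p x w := by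
      have h := cs_n n (fun i => ∑ j, x i j * δv j) (fun i => ∑ j, x i j * w j)
      have hDalt : D = Real.sqrt ((n:ℝ)⁻¹ * ∑ i, (∑ j, x i j * δv j) ^ 2) := by
        rw [hDdef, predNorm]
      rw [hDalt, predNorm]
      exact h
    have hkey : (mhat:ℝ) * (lam / n) ^ 2 ≤ lam / (c * n) * (mhat * (lam / n))
        + 2 * (cs * predNorm n p x w) + 2 * (D * predNorm n p x w) := by
      rw [hdec] at hE2
      linarith [hGw, hE2, hT1, hT1b, hT2, hT3,
        le_abs_self (∑ j, S j * w j),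
        le_abs_self ((n:ℝ)⁻¹ * ∑ i, (f i - ∑ k, x i k * β0 k) * (∑ j, x i j * w j)),
        neg_abs_le ((n:ℝ)⁻¹ * ∑ i, (f i - ∑ k, x i k * β0 k) * (∑ j, x i j * w j)),
        le_abs_self ((n:ℝ)⁻¹ * ∑ i, (∑ j, x i j * δv j) * (∑ j, x i j * w j)),
        neg_abs_le ((n:ℝ)⁻¹ * ∑ i, (∑ j, x i j * δv j) * (∑ j, x i j * w j))]
    -- divide out
    have hPmul : (cs + D) * predNorm n p x w
        ≤ (cs + D) * (Real.sqrt φ * (Real.sqrt mhat * (lam / n))) :=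
      mul_le_mul_of_nonneg_left hphiw (by linarith)
    have hstepa : (mhat:ℝ) * (lam / n) ^ 2 * (1 - 1/c)
        ≤ 2 * (cs + D) * (Real.sqrt φ * (Real.sqrt mhat * (lam / n))) := by
      have hexp : lam / (c * n) * ((mhat:ℝ) * (lam / n)) = 1/c * ((mhat:ℝ) * (lam/n)^2) := by
        field_simp
      nlinarith [hkey, hPmul, hexp]
    have hLpos : 0 < lam / (n:ℝ) := by positivity
    have hdiv : Real.sqrt mhat * ((lam / n) * (1 - 1/c)) ≤ 2 * Real.sqrt φ * (cs + D) := by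
      by_contra hcon
      push_neg at hcon
      have hpos : 0 < Real.sqrt mhat * (lam / n) := mul_pos hM0 hLpos
      have hstepaM : Real.sqrt mhat ^ 2 * (lam / n) ^ 2 * (1 - 1/c)
          ≤ 2 * (cs + D) * (Real.sqrt φ * (Real.sqrt mhat * (lam / n))) := by
        rw [hM2]; exact hstepa
      nlinarith [hstepaM, mul_lt_mul_of_pos_left hcon hpos]
    have hK : 0 < (lam / n) * (1 - 1/c) := by
      have h1c : 0 < 1 - 1/c := by
        rw [sub_pos, div_lt_one hc0]; exact hc
      exact mul_pos hLpos h1c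
    have hMfin : Real.sqrt mhat ≤ 2 * Real.sqrt φ * (cs + D) / ((lam / n) * (1 - 1/c)) := by
      rw [le_div_iff₀ hK]
      linarith [hdiv]
    have hnum : 2 * Real.sqrt φ * (cs + D)
        ≤ 2 * Real.sqrt φ * (3 * cs + (1 + 1/c) * lam * Real.sqrt s / ((n:ℝ) * κ)) := by
      apply mul_le_mul_of_nonneg_left _ (by linarith)
      linarith [hrate]
    have hMfin2 : Real.sqrt mhat
        ≤ 2 * Real.sqrt φ * (3 * cs + (1 + 1/c) * lam * Real.sqrt s / ((n:ℝ) * κ))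
          / ((lam / n) * (1 - 1/c)) :=
      le_trans hMfin (div_le_div_of_nonneg_right hnum hK.le)
    have heqfin : 2 * Real.sqrt φ * (3 * cs + (1 + 1/c) * lam * Real.sqrt s / ((n:ℝ) * κ))
          / ((lam / n) * (1 - 1/c))
        = Real.sqrt s * Real.sqrt φ * (2 * cbar) / κ
          + 3 * (cbar + 1) * Real.sqrt φ * n * cs / lam := by
      rw [hcbar]
      field_simp
      ring
    linarith [hMfin2, le_of_eq heqfin]
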